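/- arXiv:1711.06792 — 3 statements merged into one kernel-verified Lean document; each statement's English description precedes it below -/
import Mathlib

section
/- There are exactly 3 equivalence classes of closed knight paths of length 4: the quotient of the set of closed knight paths p : ZMod 4 → ℤ × ℤ by the equivalence relation p ~ g ∘ p ∘ σ (g a board symmetry, σ a dihedral reindexing of ZMod 4) has cardinality 3. -/
/-- Two cells of `ℤ × ℤ` are a knight's move apart. -/
def KnightMove (u v : ℤ × ℤ) : Prop :=
  (|u.1 - v.1| = 1 ∧ |u.2 - v.2| = 2) ∨ (|u.1 - v.1| = 2 ∧ |u.2 - v.2| = 1)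

/-- A closed knight path of length `n`. -/
def IsClosedKnightPath (n : ℕ) (p : ZMod n → ℤ × ℤ) : Prop :=
  Function.Injective p ∧ ∀ i : ZMod n, KnightMove (p i) (p (i + 1))

/-- The 90° rotation `(x, y) ↦ (-y, x)` as a `ℤ`-linear automorphism of `ℤ × ℤ`. -/
def rot90 : (ℤ × ℤ) ≃ₗ[ℤ] ℤ × ℤ where
  toFun x := (-x.2, x.1)
  invFun x := (x.2, -x.1)
  map_add' a b := by simp [Prod.ext_iff]; ring
  map_smul' m x := by simp [Prod.ext_iff]
  left_inv x := by simp
  right_inv x := by simp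

/-- The reflection `(x, y) ↦ (y, x)` as a `ℤ`-linear automorphism of `ℤ × ℤ`. -/
def reflDiag : (ℤ × ℤ) ≃ₗ[ℤ] ℤ × ℤ where
  toFun x := (x.2, x.1)
  invFun x := (x.2, x.1)
  map_add' a b := by simp [Prod.ext_iff]
  map_smul' m x := by simp [Prod.ext_iff]
  left_inv x := by simp
  right_inv x := by simp

/-- A board symmetry is a map `x ↦ A x + t` with `A` in the group generated by the
90° rotation and the reflection, and `t ∈ ℤ × ℤ`. -/
def IsBoardSymmetry (g : ℤ × ℤ → ℤ × ℤ) : Prop :=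
  ∃ A ∈ Subgroup.closure ({rot90, reflDiag} : Set ((ℤ × ℤ) ≃ₗ[ℤ] ℤ × ℤ)),
    ∃ t : ℤ × ℤ, g = fun x => A x + t

/-- A dihedral reindexing of `ZMod n`: a map `i ↦ ε i + c` with `ε = ±1`. -/
def IsDihedralReindex (n : ℕ) (σ : ZMod n → ZMod n) : Prop :=
  ∃ ε c : ZMod n, (ε = 1 ∨ ε = -1) ∧ σ = fun i => ε * i + c

/-- Two paths are equivalent if one is obtained from the other by a board symmetry
together with a dihedral reindexing. -/
def PathEquiv (n : ℕ) (p p' : ZMod n → ℤ × ℤ) : Prop :=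
  ∃ g σ, IsBoardSymmetry g ∧ IsDihedralReindex n σ ∧ p' = g ∘ p ∘ σ

/- ### auxiliary machinery -/

abbrev D4 : Subgroup ((ℤ × ℤ) ≃ₗ[ℤ] ℤ × ℤ) :=
  Subgroup.closure ({rot90, reflDiag} : Set ((ℤ × ℤ) ≃ₗ[ℤ] ℤ × ℤ))

lemma hr : rot90 ∈ D4 := Subgroup.subset_closure (by simp)
lemma hs : reflDiag ∈ D4 := Subgroup.subset_closure (by simp)

@[simp] lemma rot90_apply (v : ℤ × ℤ) : rot90 v = (-v.2, v.1) := rfl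
@[simp] lemma reflDiag_apply (v : ℤ × ℤ) : reflDiag v = (v.2, v.1) := rfl
@[simp] lemma oneAut_apply (v : ℤ × ℤ) : (1 : (ℤ × ℤ) ≃ₗ[ℤ] ℤ × ℤ) v = v := rfl

def kvecs : List (ℤ × ℤ) := [(1,2),(2,1),(2,-1),(1,-2),(-1,-2),(-2,-1),(-2,1),(-1,2)]

lemma knight_mem {u v : ℤ × ℤ} (h : KnightMove u v) : v - u ∈ kvecs := by
  have hvu : v - u = (v.1 - u.1, v.2 - u.2) := rfl
  rw [hvu]
  rcases h with ⟨h1, h2⟩ | ⟨h1, h2⟩ <;>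
  · have e1 := (abs_eq (by norm_num : (0:ℤ) ≤ _)).mp h1
    have e2 := (abs_eq (by norm_num : (0:ℤ) ≤ _)).mp h2
    rw [show v.1 - u.1 = -(u.1 - v.1) from by ring, show v.2 - u.2 = -(u.2 - v.2) from by ring]
    rcases e1 with e1 | e1 <;> rcases e2 with e2 | e2 <;> rw [e1, e2] <;> decide

set_option maxRecDepth 10000 in
lemma para_aux : ∀ d0 ∈ kvecs, ∀ d1 ∈ kvecs, ∀ d2 ∈ kvecs, ∀ d3 ∈ kvecs,
    d0 + d1 + d2 + d3 = 0 → d0 + d1 ≠ 0 → d1 + d2 ≠ 0 → d0 + d1 + d2 ≠ 0 → d3 + d0 ≠ 0 →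
    d2 = -d0 ∧ d3 = -d1 := by decide

/-- the parallelogram path -/
def para (x a b : ℤ × ℤ) : ZMod 4 → ℤ × ℤ := ![x, x+a, x+a+b, x+b]

@[simp] lemma para_app0 (x a b : ℤ × ℤ) : para x a b 0 = x := rfl
@[simp] lemma para_app1 (x a b : ℤ × ℤ) : para x a b 1 = x + a := rfl
@[simp] lemma para_app2 (x a b : ℤ × ℤ) : para x a b 2 = x + a + b := rfl
@[simp] lemma para_app3 (x a b : ℤ × ℤ) : para x a b 3 = x + b := rfl

def RepP : Fin 3 → (ZMod 4 → ℤ × ℤ) := fun k => para 0 (1,2) (![(2,1),(2,-1),(1,-2)] k)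

lemma funext4 {f g : ZMod 4 → ℤ × ℤ} (h0 : f 0 = g 0) (h1 : f 1 = g 1)
    (h2 : f 2 = g 2) (h3 : f 3 = g 3) : f = g := by
  funext i
  have hi : ∀ j : ZMod 4, j = 0 ∨ j = 1 ∨ j = 2 ∨ j = 3 := by decide
  rcases hi i with rfl | rfl | rfl | rfl <;> assumption

/- ### basic equivalences -/

lemma equiv_of_eq (p q : ZMod 4 → ℤ × ℤ) (A : (ℤ × ℤ) ≃ₗ[ℤ] ℤ × ℤ) (hA : A ∈ D4)
    (t : ℤ × ℤ) (ε c : ZMod 4) (hε : ε = 1 ∨ ε = -1)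
    (h : q = fun i => A (p (ε * i + c)) + t) : PathEquiv 4 p q :=
  ⟨fun x => A x + t, fun i => ε * i + c, ⟨A, hA, t, rfl⟩, ⟨ε, c, hε, rfl⟩, h⟩

lemma pathEquiv_trans {p q r : ZMod 4 → ℤ × ℤ} :
    PathEquiv 4 p q → PathEquiv 4 q r → PathEquiv 4 p r := by
  rintro ⟨g, σ, ⟨A, hA, t, rfl⟩, ⟨ε, c, hε, rfl⟩, rfl⟩
    ⟨g', σ', ⟨A', hA', t', rfl⟩, ⟨ε', c', hε', rfl⟩, rfl⟩
  refine equiv_of_eq _ _ (A' * A) (mul_mem hA' hA) (A' t + t') (ε * ε') (ε * c' + c) ?_ ?_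
  · rcases hε with rfl | rfl <;> rcases hε' with rfl | rfl <;> simp
  · funext i
    show A' (A (p (ε * (ε' * i + c') + c)) + t) + t' = A' (A (p (ε * ε' * i + (ε * c' + c)))) + (A' t + t')
    rw [map_add, show ε * (ε' * i + c') + c = ε * ε' * i + (ε * c' + c) from by ring, add_assoc]

lemma pathEquiv_refl (p : ZMod 4 → ℤ × ℤ) : PathEquiv 4 p p :=
  equiv_of_eq p p 1 (one_mem _) 0 1 0 (Or.inl rfl) (by funext i; simp)

lemma para_translate (x a b : ℤ × ℤ) : PathEquiv 4 (para x a b) (para 0 a b) :=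
  equiv_of_eq _ _ 1 (one_mem _) (-x) 1 0 (Or.inl rfl) (by
    refine funext4 ?_ ?_ ?_ ?_ <;>
      simp only [show (1:ZMod 4)*0+0 = 0 from by decide, show (1:ZMod 4)*1+0 = 1 from by decide,
        show (1:ZMod 4)*2+0 = 2 from by decide, show (1:ZMod 4)*3+0 = 3 from by decide,
        oneAut_apply, para_app0, para_app1, para_app2, para_app3] <;> abel)

lemma para_map (a b : ℤ × ℤ) (A : (ℤ × ℤ) ≃ₗ[ℤ] ℤ × ℤ) (hA : A ∈ D4) :
    PathEquiv 4 (para 0 a b) (para 0 (A a) (A b)) :=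
  equiv_of_eq _ _ A hA 0 1 0 (Or.inl rfl) (by
    refine funext4 ?_ ?_ ?_ ?_ <;>
      simp only [show (1:ZMod 4)*0+0 = 0 from by decide, show (1:ZMod 4)*1+0 = 1 from by decide,
        show (1:ZMod 4)*2+0 = 2 from by decide, show (1:ZMod 4)*3+0 = 3 from by decide,
        para_app0, para_app1, para_app2, para_app3, map_add, map_zero, add_zero, zero_add])

lemma para_shift (a b : ℤ × ℤ) : PathEquiv 4 (para 0 a b) (para 0 b (-a)) :=
  equiv_of_eq _ _ 1 (one_mem _) (-a) 1 1 (Or.inl rfl) (by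
    refine funext4 ?_ ?_ ?_ ?_ <;>
      simp only [show (1:ZMod 4)*0+1 = 1 from by decide, show (1:ZMod 4)*1+1 = 2 from by decide,
        show (1:ZMod 4)*2+1 = 3 from by decide, show (1:ZMod 4)*3+1 = 0 from by decide,
        oneAut_apply, para_app0, para_app1, para_app2, para_app3] <;> abel)

lemma para_rev (a b : ℤ × ℤ) : PathEquiv 4 (para 0 a b) (para 0 b a) :=
  equiv_of_eq _ _ 1 (one_mem _) 0 (-1) 0 (Or.inr rfl) (by
    refine funext4 ?_ ?_ ?_ ?_ <;>
      simp only [show (-1:ZMod 4)*0+0 = 0 from by decide, show (-1:ZMod 4)*1+0 = 3 from by decide,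
        show (-1:ZMod 4)*2+0 = 2 from by decide, show (-1:ZMod 4)*3+0 = 1 from by decide,
        oneAut_apply, para_app0, para_app1, para_app2, para_app3] <;> abel)

/- ### classification -/

lemma step2 : ∀ b ∈ kvecs, b ≠ (1,2) → b ≠ (-1,-2) →
    ∃ k : Fin 3, PathEquiv 4 (para 0 (1,2) b) (RepP k) := by
  intro b hb hb1 hb2
  fin_cases hb
  · exact absurd rfl hb1
  · exact ⟨0, pathEquiv_refl _⟩
  · exact ⟨1, pathEquiv_refl _⟩
  · exact ⟨2, pathEquiv_refl _⟩
  · exact absurd rfl hb2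
  · exact ⟨0, pathEquiv_trans (para_shift _ _)
      (para_map (-2,-1) (-1,-2) (rot90 * rot90 * reflDiag) (mul_mem (mul_mem hr hr) hs))⟩
  · exact ⟨1, pathEquiv_trans (para_rev _ _)
      (para_map (-2,1) (1,2) (rot90 * rot90 * rot90) (mul_mem (mul_mem hr hr) hr))⟩
  · exact ⟨2, pathEquiv_trans (para_shift _ _)
      (para_map (-1,2) (-1,-2) (rot90 * reflDiag) (mul_mem hr hs))⟩

lemma kvecs_stable {A : (ℤ × ℤ) ≃ₗ[ℤ] ℤ × ℤ} (hA : A ∈ D4) :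
    ∀ v : ℤ × ℤ, v ∈ kvecs ↔ A v ∈ kvecs := by
  induction hA using Subgroup.closure_induction with
  | mem B hB =>
    have gen : ∀ B : (ℤ × ℤ) ≃ₗ[ℤ] ℤ × ℤ, (∀ w ∈ kvecs, B w ∈ kvecs) →
        (∀ w ∈ kvecs, B.symm w ∈ kvecs) → ∀ v : ℤ × ℤ, v ∈ kvecs ↔ B v ∈ kvecs := by
      intro B fwd bwd v
      refine ⟨fwd v, fun h => ?_⟩
      have h2 := bwd _ h
      rwa [B.symm_apply_apply] at h2
    rcases hB with rfl | rfl <;>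
      exact gen _ (by intro w hw; fin_cases hw <;> decide)
        (by intro w hw; fin_cases hw <;> decide)
  | one => intro v; rfl
  | mul B C _ _ hB hC => intro v; exact (hC v).trans (hB (C v))
  | inv B _ hB =>
    intro v
    have h := hB (B⁻¹ v)
    rw [show B (B⁻¹ v) = v from B.apply_symm_apply v] at h
    exact h.symm

lemma classify_pair : ∀ a ∈ kvecs, ∀ b, b ∈ kvecs → b ≠ a → b ≠ -a →
    ∃ k : Fin 3, PathEquiv 4 (para 0 a b) (RepP k) := by
  have key : ∀ (A : (ℤ × ℤ) ≃ₗ[ℤ] ℤ × ℤ), A ∈ D4 → ∀ a b : ℤ × ℤ, A a = (1,2) →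
      b ∈ kvecs → b ≠ a → b ≠ -a → ∃ k : Fin 3, PathEquiv 4 (para 0 a b) (RepP k) := by
    intro A hA a b hAa hb hb1 hb2
    obtain ⟨k, hk⟩ := step2 (A b) ((kvecs_stable hA b).mp hb)
      (fun e => hb1 (A.injective (e.trans hAa.symm)))
      (fun e => hb2 (A.injective (by rw [e, map_neg, hAa]; decide)))
    exact ⟨k, pathEquiv_trans (by have h := para_map a b A hA; rwa [hAa] at h) hk⟩
  intro a ha b hb hb1 hb2
  fin_cases ha
  · exact key 1 (one_mem _) _ b rfl hb hb1 hb2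
  · exact key reflDiag hs _ b rfl hb hb1 hb2
  · exact key rot90 hr _ b rfl hb hb1 hb2
  · exact key (reflDiag * rot90) (mul_mem hs hr) _ b rfl hb hb1 hb2
  · exact key (rot90 * rot90) (mul_mem hr hr) _ b rfl hb hb1 hb2
  · exact key (rot90 * rot90 * reflDiag) (mul_mem (mul_mem hr hr) hs) _ b rfl hb hb1 hb2
  · exact key (rot90 * rot90 * rot90) (mul_mem (mul_mem hr hr) hr) _ b rfl hb hb1 hb2
  · exact key (rot90 * reflDiag) (mul_mem hr hs) _ b rfl hb hb1 hb2

lemma classify (p : ZMod 4 → ℤ × ℤ) (h : IsClosedKnightPath 4 p) :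
    ∃ k : Fin 3, PathEquiv 4 p (RepP k) := by
  obtain ⟨hI, hK⟩ := h
  set d0 := p 1 - p 0 with hd0
  set d1 := p 2 - p 1 with hd1
  set d2 := p 3 - p 2 with hd2
  set d3 := p 0 - p 3 with hd3
  have m0 : d0 ∈ kvecs := by have := knight_mem (hK 0); rwa [show (0:ZMod 4)+1 = 1 by decide] at this
  have m1 : d1 ∈ kvecs := by have := knight_mem (hK 1); rwa [show (1:ZMod 4)+1 = 2 by decide] at this
  have m2 : d2 ∈ kvecs := by have := knight_mem (hK 2); rwa [show (2:ZMod 4)+1 = 3 by decide] at this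
  have m3 : d3 ∈ kvecs := by have := knight_mem (hK 3); rwa [show (3:ZMod 4)+1 = 0 by decide] at this
  have hsum : d0 + d1 + d2 + d3 = 0 := by rw [hd0, hd1, hd2, hd3]; ring
  have ne20 : p 2 ≠ p 0 := fun e => absurd (hI e) (by decide)
  have ne31 : p 3 ≠ p 1 := fun e => absurd (hI e) (by decide)
  have ne30 : p 3 ≠ p 0 := fun e => absurd (hI e) (by decide)
  have ne13 : p 1 ≠ p 3 := fun e => absurd (hI e) (by decide)
  obtain ⟨e2, e3⟩ := para_aux d0 m0 d1 m1 d2 m2 d3 m3 hsum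
    (by rw [hd0, hd1]; intro e; exact ne20 (by linear_combination e))
    (by rw [hd1, hd2]; intro e; exact ne31 (by linear_combination e))
    (by rw [hd0, hd1, hd2]; intro e; exact ne30 (by linear_combination e))
    (by rw [hd3, hd0]; intro e; exact ne13 (by linear_combination e))
  have hb1 : d1 ≠ d0 := by
    intro e
    apply ne31
    have h2' : d2 = -d0 := e2
    rw [hd1, hd0] at e; rw [hd2, hd0] at h2'
    linear_combination h2' + e
  have hb2 : d1 ≠ -d0 := by
    rw [hd0, hd1]; intro e; exact ne20 (by linear_combination e)
  have hp : p = para (p 0) d0 d1 := by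
    refine funext4 ?_ ?_ ?_ ?_
    · simp [para]
    · show p 1 = para (p 0) d0 d1 1
      rw [para_app1, hd0]; abel
    · show p 2 = para (p 0) d0 d1 2
      rw [para_app2, hd0, hd1]; abel
    · show p 3 = para (p 0) d0 d1 3
      rw [para_app3]
      have h3' : d3 = -d1 := e3
      rw [hd3, hd1] at h3'
      linear_combination -h3'
  obtain ⟨k, hk⟩ := classify_pair d0 m0 d1 m1 hb1 hb2
  refine ⟨k, ?_⟩
  rw [hp]
  exact pathEquiv_trans (para_translate _ _ _) hk

/- ### the invariant -/

def nrm (v : ℤ × ℤ) : ℤ := v.1^2 + v.2^2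

lemma nrm_A {A : (ℤ × ℤ) ≃ₗ[ℤ] ℤ × ℤ} (hA : A ∈ D4) : ∀ v, nrm (A v) = nrm v := by
  induction hA using Subgroup.closure_induction with
  | mem B hB => rcases hB with rfl | rfl <;> intro v <;> simp [nrm] <;> ring
  | one => intro v; rfl
  | mul B C _ _ hB hC => intro v; exact (hB (C v)).trans (hC v)
  | inv B _ hB => intro v; rw [← hB (B⁻¹ v)]; congr 1; exact B.apply_symm_apply v

def pinv (p : ZMod 4 → ℤ × ℤ) : ℤ :=
  min (min (nrm (p (0+2) - p 0)) (nrm (p (1+2) - p 1)))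
      (min (nrm (p (2+2) - p 2)) (nrm (p (3+2) - p 3)))

lemma pinv_invariant {p q : ZMod 4 → ℤ × ℤ} (h : PathEquiv 4 p q) : pinv q = pinv p := by
  obtain ⟨g, σ, ⟨A, hA, t, rfl⟩, ⟨ε, c, hε, rfl⟩, rfl⟩ := h
  have h4 : (4 : ZMod 4) = 0 := by decide
  set hfun : ZMod 4 → ℤ := fun j => nrm (p (j + 2) - p j) with hh
  have hd : ∀ i : ZMod 4,
      nrm (((fun x => A x + t) ∘ p ∘ fun i => ε * i + c) (i + 2)
        - ((fun x => A x + t) ∘ p ∘ fun i => ε * i + c) i) = hfun (ε * i + c) := by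
    intro i
    have e : ε * (i + 2) + c = (ε * i + c) + 2 := by
      rcases hε with rfl | rfl
      · ring
      · linear_combination -h4
    show nrm ((A (p (ε * (i+2) + c)) + t) - (A (p (ε * i + c)) + t)) = _
    rw [e, show ∀ x y : ℤ × ℤ, (A x + t) - (A y + t) = A (x - y) from fun x y => by
      rw [map_sub]; abel]
    exact nrm_A hA _
  have hper : ∀ j : ZMod 4, hfun (j + 2) = hfun j := by
    intro j
    show nrm (p (j + 2 + 2) - p (j + 2)) = nrm (p (j + 2) - p j)
    rw [show j + 2 + 2 = j from by linear_combination h4]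
    show (p j - p (j+2)).1^2 + (p j - p (j+2)).2^2 = (p (j+2) - p j).1^2 + (p (j+2) - p j).2^2
    simp only [Prod.fst_sub, Prod.snd_sub]
    ring
  have hp : pinv p = min (hfun 0) (hfun 1) := by
    show min (min (hfun 0) (hfun 1)) (min (hfun (0+2)) (hfun (1+2))) = _
    rw [hper, hper, min_self]
  show min (min _ _) (min _ _) = pinv p
  rw [hd 0, hd 1, hd 2, hd 3]
  have hσ2 : ε * 2 + c = (ε * 0 + c) + 2 := by
    rcases hε with rfl | rfl
    · ring
    · linear_combination -h4
  have hσ3 : ε * 3 + c = (ε * 1 + c) + 2 := by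
    rcases hε with rfl | rfl
    · ring
    · linear_combination -h4
  rw [hσ2, hσ3, hper, hper, min_self, hp]
  have hc : ∀ j : ZMod 4, j = 0 ∨ j = 1 ∨ j = 2 ∨ j = 3 := by decide
  rcases hε with rfl | rfl <;> rcases hc c with rfl | rfl | rfl | rfl
  · simp only [show (1:ZMod 4)*0+0 = 0 from by decide, show (1:ZMod 4)*1+0 = 1 from by decide]
  · simp only [show (1:ZMod 4)*0+1 = 1 from by decide, show (1:ZMod 4)*1+1 = 0+2 from by decide,
      hper]
    exact min_comm _ _
  · simp only [show (1:ZMod 4)*0+2 = 0+2 from by decide, show (1:ZMod 4)*1+2 = 1+2 from by decide,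
      hper]
  · simp only [show (1:ZMod 4)*0+3 = 1+2 from by decide, show (1:ZMod 4)*1+3 = 0 from by decide,
      hper]
    exact min_comm _ _
  · simp only [show (-1:ZMod 4)*0+0 = 0 from by decide, show (-1:ZMod 4)*1+0 = 1+2 from by decide,
      hper]
  · simp only [show (-1:ZMod 4)*0+1 = 1 from by decide, show (-1:ZMod 4)*1+1 = 0 from by decide]
    exact min_comm _ _
  · simp only [show (-1:ZMod 4)*0+2 = 0+2 from by decide, show (-1:ZMod 4)*1+2 = 1 from by decide,
      hper]
  · simp only [show (-1:ZMod 4)*0+3 = 1+2 from by decide, show (-1:ZMod 4)*1+3 = 0+2 from by decide,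
      hper]
    exact min_comm _ _

/- ### reps are closed knight paths -/

instance (u v : ℤ × ℤ) : Decidable (KnightMove u v) := by unfold KnightMove; infer_instance

instance (p : ZMod 4 → ℤ × ℤ) : Decidable (IsClosedKnightPath 4 p) := by
  unfold IsClosedKnightPath; infer_instance

lemma rep_closed : ∀ k : Fin 3, IsClosedKnightPath 4 (RepP k) := by decide

def clsf (v : ℤ) : Fin 3 := if v = 2 then 0 else if v = 10 then 1 else 2

lemma cl_rep : ∀ k : Fin 3, clsf (pinv (RepP k)) = k := by decide

/- ### main theorem -/

/-- There are exactly 3 equivalence classes of closed knight paths of length 4. -/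
theorem count_closedKnightPaths_length_4 :
    Nat.card (Quot (fun p q : {p : ZMod 4 → ℤ × ℤ // IsClosedKnightPath 4 p} =>
      PathEquiv 4 p.1 q.1)) = 3 := by
  set R := fun p q : {p : ZMod 4 → ℤ × ℤ // IsClosedKnightPath 4 p} => PathEquiv 4 p.1 q.1
    with hR
  let RepS : Fin 3 → {p : ZMod 4 → ℤ × ℤ // IsClosedKnightPath 4 p} :=
    fun k => ⟨RepP k, rep_closed k⟩
  let G : Fin 3 → Quot R := fun k => Quot.mk R (RepS k)
  let F : Quot R → Fin 3 :=
    Quot.lift (fun p => clsf (pinv p.1)) (fun p q hpq => by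
      simp only [pinv_invariant hpq])
  have hFG : ∀ k, F (G k) = k := fun k => cl_rep k
  have hGsurj : Function.Surjective G := by
    intro x
    induction x using Quot.ind with
    | _ p =>
      obtain ⟨k, hk⟩ := classify p.1 p.2
      have hk' : R p ⟨RepP k, rep_closed k⟩ := hk
      exact ⟨k, (Quot.sound (r := R) hk').symm⟩
  have hcard : Nat.card (Quot R) = Nat.card (Fin 3) :=
    (Nat.card_eq_of_bijective G ⟨fun a b hab => by rw [← hFG a, ← hFG b, hab], hGsurj⟩).symm
  simpa using hcard
end

section
/- There are exactly 25 equivalence classes of closed knight paths of length 6: the quotient of the set of closed knight paths p : ZMod 6 → ℤ × ℤ by the equivalence relation p ~ g ∘ p ∘ σ (g a board symmetry, σ a dihedral reindexing of ZMod 6) has cardinality 25. -/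
namespace CKP25

instance (u v : ℤ × ℤ) : Decidable (KnightMove u v) := by
  unfold KnightMove; infer_instance

instance (p : ZMod 6 → ℤ × ℤ) : Decidable (IsClosedKnightPath 6 p) := by
  unfold IsClosedKnightPath Function.Injective; infer_instance

def M8 (k : Fin 8) : ℤ × ℤ :=
  match k.val with
  | 0 => (1, 2) | 1 => (2, 1) | 2 => (2, -1) | 3 => (1, -2)
  | 4 => (-1, -2) | 5 => (-2, -1) | 6 => (-2, 1) | _ => (-1, 2)

def Gf (k : Fin 8) (x : ℤ × ℤ) : ℤ × ℤ :=
  match k.val with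
  | 0 => x
  | 1 => (-x.2, x.1)
  | 2 => (-x.1, -x.2)
  | 3 => (x.2, -x.1)
  | 4 => (x.2, x.1)
  | 5 => (-x.1, x.2)
  | 6 => (-x.2, -x.1)
  | _ => (x.1, -x.2)

def mul8 (k k' : Fin 8) : Fin 8 :=
  match k.val, k'.val with
  | 0, 0 => 0
  | 0, 1 => 1
  | 0, 2 => 2
  | 0, 3 => 3
  | 0, 4 => 4
  | 0, 5 => 5
  | 0, 6 => 6
  | 0, _ => 7
  | 1, 0 => 1
  | 1, 1 => 2
  | 1, 2 => 3
  | 1, 3 => 0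
  | 1, 4 => 5
  | 1, 5 => 6
  | 1, 6 => 7
  | 1, _ => 4
  | 2, 0 => 2
  | 2, 1 => 3
  | 2, 2 => 0
  | 2, 3 => 1
  | 2, 4 => 6
  | 2, 5 => 7
  | 2, 6 => 4
  | 2, _ => 5
  | 3, 0 => 3
  | 3, 1 => 0
  | 3, 2 => 1
  | 3, 3 => 2
  | 3, 4 => 7
  | 3, 5 => 4
  | 3, 6 => 5
  | 3, _ => 6
  | 4, 0 => 4
  | 4, 1 => 7
  | 4, 2 => 6
  | 4, 3 => 5
  | 4, 4 => 0
  | 4, 5 => 3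
  | 4, 6 => 2
  | 4, _ => 1
  | 5, 0 => 5
  | 5, 1 => 4
  | 5, 2 => 7
  | 5, 3 => 6
  | 5, 4 => 1
  | 5, 5 => 0
  | 5, 6 => 3
  | 5, _ => 2
  | 6, 0 => 6
  | 6, 1 => 5
  | 6, 2 => 4
  | 6, 3 => 7
  | 6, 4 => 2
  | 6, 5 => 1
  | 6, 6 => 0
  | 6, _ => 3
  | _, 0 => 7
  | _, 1 => 6
  | _, 2 => 5
  | _, 3 => 4
  | _, 4 => 3
  | _, 5 => 2
  | _, 6 => 1
  | _, _ => 0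

def inv8 (k : Fin 8) : Fin 8 :=
  match k.val with
  | 0 => 0 | 1 => 3 | 2 => 2 | 3 => 1 | 4 => 4 | 5 => 5 | 6 => 6 | _ => 7

def Gl (k : Fin 8) : (ℤ × ℤ) ≃ₗ[ℤ] ℤ × ℤ :=
  match k.val with
  | 0 => 1
  | 1 => rot90
  | 2 => rot90 * rot90
  | 3 => rot90 * rot90 * rot90
  | 4 => reflDiag
  | 5 => rot90 * reflDiag
  | 6 => rot90 * rot90 * reflDiag
  | _ => rot90 * rot90 * rot90 * reflDiag

lemma Gf_comp (k k' : Fin 8) (x : ℤ × ℤ) : Gf k (Gf k' x) = Gf (mul8 k k') x := by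
  fin_cases k <;> fin_cases k' <;> (first | rfl | simp [Gf, mul8])

lemma mul8_inv8 : ∀ k : Fin 8, mul8 k (inv8 k) = 0 := by decide

lemma Gl_apply (k : Fin 8) (x : ℤ × ℤ) : Gl k x = Gf k x := by
  have hmul : ∀ (A B : (ℤ × ℤ) ≃ₗ[ℤ] ℤ × ℤ) (y : ℤ × ℤ), (A * B) y = A (B y) := fun _ _ _ => rfl
  fin_cases k <;> (first | rfl | simp [Gl, Gf, hmul, rot90, reflDiag])

lemma Gl_mem (k : Fin 8) :
    Gl k ∈ Subgroup.closure ({rot90, reflDiag} : Set ((ℤ × ℤ) ≃ₗ[ℤ] ℤ × ℤ)) := by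
  have hr : rot90 ∈ Subgroup.closure ({rot90, reflDiag} : Set ((ℤ × ℤ) ≃ₗ[ℤ] ℤ × ℤ)) :=
    Subgroup.subset_closure (by simp)
  have hs : reflDiag ∈ Subgroup.closure ({rot90, reflDiag} : Set ((ℤ × ℤ) ≃ₗ[ℤ] ℤ × ℤ)) :=
    Subgroup.subset_closure (by simp)
  fin_cases k
  · exact one_mem _
  · exact hr
  · exact mul_mem hr hr
  · exact mul_mem (mul_mem hr hr) hr
  · exact hs
  · exact mul_mem hr hs
  · exact mul_mem (mul_mem hr hr) hs
  · exact mul_mem (mul_mem (mul_mem hr hr) hr) hs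

lemma closure_exists {A : (ℤ × ℤ) ≃ₗ[ℤ] ℤ × ℤ}
    (hA : A ∈ Subgroup.closure ({rot90, reflDiag} : Set ((ℤ × ℤ) ≃ₗ[ℤ] ℤ × ℤ))) :
    ∃ k : Fin 8, ∀ x, A x = Gf k x := by
  induction hA using Subgroup.closure_induction with
  | mem x hx =>
    rcases hx with h | h
    · exact ⟨1, fun y => by rw [h]; rfl⟩
    · exact ⟨4, fun y => by rw [Set.mem_singleton_iff.mp h]; rfl⟩
  | one => exact ⟨0, fun y => rfl⟩
  | mul x y hx hy ihx ihy =>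
    obtain ⟨k, hk⟩ := ihx; obtain ⟨k', hk'⟩ := ihy
    exact ⟨mul8 k k', fun z => by
      rw [show (x * y) z = x (y z) from rfl, hk', hk, Gf_comp]⟩
  | inv x hx ih =>
    obtain ⟨k, hk⟩ := ih
    refine ⟨inv8 k, fun z => ?_⟩
    have h1 : x (Gf (inv8 k) z) = z := by
      rw [hk, Gf_comp, mul8_inv8]; rfl
    show x.symm z = _
    rw [LinearEquiv.symm_apply_eq, h1]

def rp (k : Fin 25) (i : ZMod 6) : ℤ × ℤ :=
  match k.val, i.val with
  | 0, 0 => (0, 0)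
  | 0, 1 => (1, 2)
  | 0, 2 => ((-1), 1)
  | 0, 3 => ((-3), 0)
  | 0, 4 => ((-4), (-2))
  | 0, _ => ((-2), (-1))
  | 1, 0 => (0, 0)
  | 1, 1 => (1, 2)
  | 1, 2 => ((-1), 3)
  | 1, 3 => ((-3), 4)
  | 1, 4 => ((-4), 2)
  | 1, _ => ((-2), 1)
  | 2, 0 => (0, 0)
  | 2, 1 => (1, 2)
  | 2, 2 => ((-1), 3)
  | 2, 3 => ((-3), 2)
  | 2, 4 => ((-2), 0)
  | 2, _ => ((-1), (-2))
  | 3, 0 => (0, 0)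
  | 3, 1 => (1, 2)
  | 3, 2 => ((-1), 1)
  | 3, 3 => ((-3), 0)
  | 3, 4 => ((-1), (-1))
  | 3, _ => (1, (-2))
  | 4, 0 => (0, 0)
  | 4, 1 => (1, 2)
  | 4, 2 => (0, 4)
  | 4, 3 => ((-1), 2)
  | 4, 4 => ((-2), 0)
  | 4, _ => ((-1), (-2))
  | 5, 0 => (0, 0)
  | 5, 1 => (1, 2)
  | 5, 2 => ((-1), 1)
  | 5, 3 => ((-2), 3)
  | 5, 4 => ((-4), 2)
  | 5, _ => ((-2), 1)
  | 6, 0 => (0, 0)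
  | 6, 1 => (1, 2)
  | 6, 2 => ((-1), 1)
  | 6, 3 => ((-3), 2)
  | 6, 4 => ((-2), 4)
  | 6, _ => ((-1), 2)
  | 7, 0 => (0, 0)
  | 7, 1 => (1, 2)
  | 7, 2 => ((-1), 1)
  | 7, 3 => ((-3), 0)
  | 7, 4 => ((-1), (-1))
  | 7, _ => ((-2), 1)
  | 8, 0 => (0, 0)
  | 8, 1 => (1, 2)
  | 8, 2 => ((-1), 1)
  | 8, 3 => ((-3), 0)
  | 8, 4 => ((-4), 2)
  | 8, _ => ((-2), 1)
  | 9, 0 => (0, 0)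
  | 9, 1 => (1, 2)
  | 9, 2 => ((-1), 3)
  | 9, 3 => ((-3), 2)
  | 9, 4 => ((-4), 0)
  | 9, _ => ((-2), (-1))
  | 10, 0 => (0, 0)
  | 10, 1 => (1, 2)
  | 10, 2 => ((-1), 1)
  | 10, 3 => ((-3), 2)
  | 10, 4 => ((-4), 0)
  | 10, _ => ((-2), (-1))
  | 11, 0 => (0, 0)
  | 11, 1 => (1, 2)
  | 11, 2 => ((-1), 3)
  | 11, 3 => ((-2), 1)
  | 11, 4 => ((-4), 0)
  | 11, _ => ((-2), (-1))
  | 12, 0 => (0, 0)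
  | 12, 1 => (1, 2)
  | 12, 2 => ((-1), 1)
  | 12, 3 => ((-2), (-1))
  | 12, 4 => (0, (-2))
  | 12, _ => (2, (-1))
  | 13, 0 => (0, 0)
  | 13, 1 => (1, 2)
  | 13, 2 => ((-1), 1)
  | 13, 3 => ((-2), (-1))
  | 13, 4 => ((-4), 0)
  | 13, _ => ((-2), 1)
  | 14, 0 => (0, 0)
  | 14, 1 => (1, 2)
  | 14, 2 => ((-1), 1)
  | 14, 3 => ((-2), (-1))
  | 14, 4 => ((-3), 1)
  | 14, _ => ((-1), 2)
  | 15, 0 => (0, 0)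
  | 15, 1 => (1, 2)
  | 15, 2 => ((-1), 3)
  | 15, 3 => ((-2), 5)
  | 15, 4 => ((-3), 3)
  | 15, _ => ((-1), 2)
  | 16, 0 => (0, 0)
  | 16, 1 => (1, 2)
  | 16, 2 => ((-1), 1)
  | 16, 3 => ((-3), 2)
  | 16, 4 => ((-4), 0)
  | 16, _ => ((-2), 1)
  | 17, 0 => (0, 0)
  | 17, 1 => (1, 2)
  | 17, 2 => ((-1), 1)
  | 17, 3 => ((-3), 2)
  | 17, 4 => ((-1), 3)
  | 17, _ => ((-2), 1)
  | 18, 0 => (0, 0)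
  | 18, 1 => (1, 2)
  | 18, 2 => ((-1), 3)
  | 18, 3 => ((-3), 2)
  | 18, 4 => ((-2), 0)
  | 18, _ => ((-1), 2)
  | 19, 0 => (0, 0)
  | 19, 1 => (1, 2)
  | 19, 2 => ((-1), 1)
  | 19, 3 => ((-2), 3)
  | 19, 4 => (0, 2)
  | 19, _ => ((-2), 1)
  | 20, 0 => (0, 0)
  | 20, 1 => (1, 2)
  | 20, 2 => ((-1), 1)
  | 20, 3 => (0, (-1))
  | 20, 4 => (1, 1)
  | 20, _ => ((-1), 2)
  | 21, 0 => (0, 0)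
  | 21, 1 => (1, 2)
  | 21, 2 => ((-1), 3)
  | 21, 3 => (0, 5)
  | 21, 4 => (1, 3)
  | 21, _ => ((-1), 2)
  | 22, 0 => (0, 0)
  | 22, 1 => (1, 2)
  | 22, 2 => ((-1), 1)
  | 22, 3 => ((-2), 3)
  | 22, 4 => ((-3), 1)
  | 22, _ => ((-1), 2)
  | 23, 0 => (0, 0)
  | 23, 1 => (1, 2)
  | 23, 2 => ((-1), 1)
  | 23, 3 => ((-3), 2)
  | 23, 4 => ((-2), 0)
  | 23, _ => ((-1), 2)
  | _, 0 => (0, 0)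
  | _, 1 => (1, 2)
  | _, 2 => ((-1), 1)
  | _, 3 => (0, 3)
  | _, 4 => (1, 1)
  | _, _ => ((-1), 2)

def W (a b c d : Fin 8) : Fin 25 × Fin 8 × Bool × ZMod 6 :=
  match a.val, b.val, c.val, d.val with
  | 0, 1, 4, 4 => (0, 4, true, 4)
  | 0, 2, 4, 4 => (1, 1, false, 3)
  | 0, 3, 3, 5 => (2, 2, false, 1)
  | 0, 3, 3, 6 => (3, 3, false, 5)
  | 0, 3, 4, 4 => (4, 0, false, 4)
  | 0, 3, 5, 3 => (5, 3, false, 0)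
  | 0, 3, 5, 6 => (6, 5, false, 0)
  | 0, 3, 6, 3 => (7, 6, true, 1)
  | 0, 3, 6, 5 => (6, 7, true, 4)
  | 0, 5, 3, 3 => (8, 3, false, 0)
  | 0, 5, 3, 6 => (7, 4, false, 3)
  | 0, 5, 4, 4 => (0, 4, false, 3)
  | 0, 5, 6, 3 => (3, 1, true, 3)
  | 0, 6, 3, 3 => (8, 1, true, 4)
  | 0, 6, 3, 5 => (5, 1, true, 4)
  | 0, 6, 4, 4 => (1, 1, true, 4)
  | 0, 6, 5, 3 => (2, 0, true, 5)
  | 0, 7, 4, 4 => (4, 0, true, 5)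
  | 1, 1, 4, 5 => (0, 0, false, 4)
  | 1, 2, 4, 5 => (9, 0, false, 4)
  | 1, 2, 4, 6 => (10, 2, false, 1)
  | 1, 2, 5, 4 => (11, 2, false, 1)
  | 1, 3, 4, 5 => (9, 4, true, 5)
  | 1, 3, 4, 7 => (12, 6, true, 1)
  | 1, 3, 5, 4 => (11, 4, true, 5)
  | 1, 4, 2, 5 => (12, 0, false, 3)
  | 1, 4, 3, 5 => (10, 4, true, 5)
  | 1, 4, 4, 5 => (0, 4, true, 5)
  | 1, 4, 6, 5 => (13, 0, false, 3)
  | 1, 4, 7, 5 => (14, 0, false, 3)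
  | 1, 6, 4, 2 => (14, 6, true, 1)
  | 1, 6, 4, 5 => (15, 1, true, 4)
  | 1, 6, 5, 4 => (11, 2, true, 2)
  | 1, 7, 4, 3 => (13, 6, true, 1)
  | 1, 7, 4, 5 => (15, 5, false, 0)
  | 1, 7, 5, 4 => (11, 4, false, 4)
  | 2, 1, 4, 5 => (10, 0, false, 4)
  | 2, 1, 4, 6 => (16, 0, false, 4)
  | 2, 1, 6, 4 => (13, 2, false, 1)
  | 2, 2, 4, 6 => (1, 0, false, 4)
  | 2, 2, 5, 5 => (2, 1, false, 2)
  | 2, 2, 5, 7 => (5, 2, false, 1)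
  | 2, 2, 7, 5 => (8, 2, false, 1)
  | 2, 3, 4, 6 => (9, 1, false, 2)
  | 2, 3, 4, 7 => (11, 1, false, 2)
  | 2, 3, 6, 4 => (12, 3, false, 4)
  | 2, 4, 1, 6 => (17, 2, false, 1)
  | 2, 4, 3, 6 => (10, 3, false, 5)
  | 2, 4, 4, 6 => (1, 1, false, 2)
  | 2, 4, 5, 6 => (11, 0, false, 3)
  | 2, 4, 7, 6 => (14, 5, false, 0)
  | 2, 5, 2, 5 => (18, 1, false, 2)
  | 2, 5, 2, 7 => (19, 2, false, 1)
  | 2, 5, 4, 1 => (14, 6, false, 5)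
  | 2, 5, 4, 6 => (15, 1, false, 2)
  | 2, 5, 5, 2 => (6, 3, true, 2)
  | 2, 5, 5, 7 => (5, 5, true, 2)
  | 2, 5, 6, 4 => (13, 2, true, 2)
  | 2, 5, 7, 2 => (20, 1, false, 5)
  | 2, 5, 7, 5 => (21, 1, false, 2)
  | 2, 7, 2, 5 => (7, 2, false, 1)
  | 2, 7, 4, 3 => (17, 3, false, 0)
  | 2, 7, 4, 6 => (22, 5, false, 0)
  | 2, 7, 5, 2 => (19, 7, false, 3)
  | 2, 7, 5, 5 => (5, 7, false, 3)
  | 2, 7, 6, 4 => (12, 3, true, 5)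
  | 3, 0, 3, 5 => (18, 2, false, 1)
  | 3, 0, 3, 6 => (23, 2, false, 1)
  | 3, 0, 5, 3 => (19, 3, false, 0)
  | 3, 0, 5, 6 => (23, 0, true, 4)
  | 3, 0, 6, 3 => (19, 1, true, 3)
  | 3, 0, 6, 5 => (18, 0, true, 4)
  | 3, 1, 4, 5 => (12, 4, true, 4)
  | 3, 1, 4, 7 => (22, 0, false, 4)
  | 3, 1, 7, 4 => (14, 2, false, 1)
  | 3, 2, 4, 6 => (11, 3, false, 5)
  | 3, 2, 4, 7 => (15, 0, false, 4)
  | 3, 2, 7, 4 => (14, 7, false, 4)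
  | 3, 3, 0, 5 => (6, 0, true, 3)
  | 3, 3, 0, 6 => (6, 2, false, 1)
  | 3, 3, 4, 7 => (4, 5, true, 1)
  | 3, 3, 5, 0 => (5, 6, true, 3)
  | 3, 3, 5, 6 => (2, 2, false, 0)
  | 3, 3, 6, 0 => (7, 3, false, 4)
  | 3, 3, 6, 5 => (3, 3, false, 4)
  | 3, 4, 1, 7 => (17, 6, false, 4)
  | 3, 4, 2, 7 => (13, 3, true, 3)
  | 3, 4, 4, 7 => (4, 0, false, 3)
  | 3, 4, 5, 7 => (11, 6, true, 3)
  | 3, 4, 6, 7 => (12, 1, false, 0)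
  | 3, 5, 0, 3 => (20, 2, false, 4)
  | 3, 5, 0, 6 => (19, 6, true, 4)
  | 3, 5, 3, 0 => (21, 0, true, 2)
  | 3, 5, 3, 6 => (5, 3, false, 5)
  | 3, 5, 4, 1 => (13, 6, false, 5)
  | 3, 5, 4, 7 => (15, 5, true, 2)
  | 3, 5, 6, 0 => (18, 2, false, 5)
  | 3, 5, 6, 3 => (6, 5, false, 5)
  | 3, 5, 7, 4 => (14, 2, true, 2)
  | 3, 6, 0, 3 => (20, 2, false, 1)
  | 3, 6, 0, 5 => (19, 4, false, 5)
  | 3, 6, 3, 0 => (24, 0, true, 2)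
  | 3, 6, 3, 5 => (7, 6, true, 2)
  | 3, 6, 4, 2 => (17, 3, true, 2)
  | 3, 6, 4, 7 => (22, 5, true, 2)
  | 3, 6, 5, 0 => (23, 2, false, 5)
  | 3, 6, 5, 3 => (6, 7, true, 5)
  | 3, 6, 7, 4 => (14, 7, true, 5)
  | 5, 0, 3, 3 => (7, 3, false, 0)
  | 5, 0, 3, 6 => (24, 0, true, 0)
  | 5, 0, 6, 3 => (7, 1, true, 3)
  | 5, 2, 1, 4 => (17, 0, false, 5)
  | 5, 2, 2, 5 => (6, 4, false, 2)
  | 5, 2, 2, 7 => (7, 7, false, 5)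
  | 5, 2, 4, 1 => (22, 4, false, 2)
  | 5, 2, 4, 6 => (14, 4, false, 2)
  | 5, 2, 5, 2 => (23, 3, true, 2)
  | 5, 2, 5, 7 => (19, 5, true, 2)
  | 5, 2, 7, 2 => (24, 1, false, 5)
  | 5, 2, 7, 5 => (20, 3, true, 4)
  | 5, 3, 0, 3 => (19, 4, false, 2)
  | 5, 3, 0, 6 => (20, 0, true, 0)
  | 5, 3, 1, 4 => (17, 4, false, 2)
  | 5, 3, 3, 0 => (5, 4, false, 2)
  | 5, 3, 3, 6 => (8, 3, false, 5)
  | 5, 3, 4, 1 => (16, 4, false, 2)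
  | 5, 3, 4, 7 => (13, 4, false, 2)
  | 5, 3, 6, 0 => (19, 3, false, 4)
  | 5, 3, 6, 3 => (7, 4, false, 2)
  | 5, 4, 2, 1 => (12, 0, true, 0)
  | 5, 4, 3, 1 => (10, 4, false, 2)
  | 5, 4, 4, 1 => (0, 4, false, 2)
  | 5, 4, 6, 1 => (13, 0, true, 0)
  | 5, 4, 7, 1 => (14, 0, true, 0)
  | 5, 5, 2, 2 => (3, 0, true, 0)
  | 5, 5, 2, 7 => (7, 0, true, 0)
  | 5, 5, 4, 1 => (0, 0, true, 0)
  | 5, 5, 7, 2 => (8, 0, true, 0)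
  | 5, 6, 0, 3 => (6, 0, true, 0)
  | 5, 6, 1, 4 => (17, 0, true, 0)
  | 5, 6, 3, 0 => (23, 0, true, 0)
  | 5, 6, 3, 3 => (3, 1, true, 4)
  | 5, 6, 4, 1 => (16, 0, true, 0)
  | 5, 6, 4, 2 => (10, 0, true, 0)
  | 5, 7, 1, 4 => (17, 4, true, 3)
  | 5, 7, 2, 2 => (7, 5, true, 4)
  | 5, 7, 2, 5 => (19, 0, true, 0)
  | 5, 7, 4, 1 => (22, 0, true, 0)
  | 5, 7, 4, 3 => (12, 4, false, 2)
  | 5, 7, 5, 2 => (5, 0, true, 0)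
  | 6, 0, 3, 3 => (5, 6, true, 1)
  | 6, 0, 3, 5 => (21, 0, true, 0)
  | 6, 0, 5, 3 => (5, 4, false, 4)
  | 6, 1, 2, 4 => (12, 2, false, 1)
  | 6, 1, 4, 2 => (22, 4, true, 4)
  | 6, 1, 4, 5 => (14, 4, true, 4)
  | 6, 3, 0, 3 => (19, 6, true, 1)
  | 6, 3, 0, 5 => (20, 0, true, 3)
  | 6, 3, 2, 4 => (13, 1, true, 5)
  | 6, 3, 3, 0 => (7, 1, true, 5)
  | 6, 3, 3, 5 => (8, 1, true, 5)
  | 6, 3, 4, 2 => (16, 1, true, 5)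
  | 6, 3, 4, 7 => (17, 1, true, 5)
  | 6, 3, 5, 0 => (19, 1, true, 5)
  | 6, 3, 5, 3 => (5, 1, true, 5)
  | 6, 4, 1, 2 => (17, 2, true, 4)
  | 6, 4, 3, 2 => (10, 3, true, 2)
  | 6, 4, 4, 2 => (1, 1, true, 5)
  | 6, 4, 5, 2 => (11, 0, true, 0)
  | 6, 4, 7, 2 => (14, 5, true, 3)
  | 6, 5, 0, 3 => (6, 2, false, 4)
  | 6, 5, 2, 4 => (12, 2, true, 2)
  | 6, 5, 3, 0 => (18, 0, true, 0)
  | 6, 5, 3, 3 => (2, 0, true, 0)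
  | 6, 5, 4, 1 => (10, 2, true, 3)
  | 6, 5, 4, 2 => (9, 0, true, 0)
  | 6, 6, 4, 2 => (1, 0, true, 0)
  | 6, 7, 2, 4 => (13, 1, false, 4)
  | 6, 7, 4, 2 => (15, 0, true, 0)
  | 6, 7, 4, 3 => (11, 3, true, 1)
  | 7, 1, 3, 4 => (10, 6, true, 1)
  | 7, 1, 4, 3 => (16, 4, true, 4)
  | 7, 1, 4, 5 => (13, 4, true, 4)
  | 7, 2, 2, 5 => (3, 2, false, 1)
  | 7, 2, 3, 4 => (10, 1, false, 3)
  | 7, 2, 4, 3 => (16, 1, false, 3)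
  | 7, 2, 4, 6 => (17, 1, false, 3)
  | 7, 2, 5, 2 => (23, 1, false, 3)
  | 7, 2, 5, 5 => (6, 1, false, 3)
  | 7, 4, 1, 3 => (17, 6, true, 1)
  | 7, 4, 2, 3 => (13, 3, false, 0)
  | 7, 4, 4, 3 => (4, 0, true, 0)
  | 7, 4, 5, 3 => (11, 6, false, 0)
  | 7, 4, 6, 3 => (12, 1, true, 3)
  | 7, 5, 2, 2 => (6, 6, true, 1)
  | 7, 5, 2, 5 => (18, 3, true, 1)
  | 7, 5, 3, 4 => (10, 6, false, 0)
  | 7, 5, 4, 1 => (12, 6, false, 5)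
  | 7, 5, 4, 3 => (9, 4, false, 3)
  | 7, 5, 5, 2 => (2, 3, true, 1)
  | 7, 6, 3, 4 => (10, 1, true, 4)
  | 7, 6, 4, 2 => (11, 1, true, 4)
  | 7, 6, 4, 3 => (9, 1, true, 4)
  | 7, 7, 4, 3 => (4, 5, false, 5)
  | _, _, _, _ => (0, 0, true, 0)

def ebz (b : Bool) : ZMod 6 := if b then 1 else -1

def pts (a b c d : Fin 8) (i : ZMod 6) : ℤ × ℤ :=
  match i.val with
  | 0 => (0, 0)
  | 1 => (1, 2)
  | 2 => (1, 2) + M8 a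
  | 3 => (1, 2) + M8 a + M8 b
  | 4 => (1, 2) + M8 a + M8 b + M8 c
  | _ => (1, 2) + M8 a + M8 b + M8 c + M8 d

set_option maxRecDepth 100000

lemma gfMove : ∀ e : Fin 8, ∃ j : Fin 8, Gf j (M8 e) = (1, 2) := by decide

lemma gf_zero : ∀ j : Fin 8, Gf j (0, 0) = (0, 0) := by decide

lemma gf_move_gen : ∀ (j e : Fin 8), ∃ e' : Fin 8, Gf j (M8 e) = M8 e' := by decide

set_option maxHeartbeats 1000000 in
lemma rp_closed : ∀ k : Fin 25, IsClosedKnightPath 6 (rp k) := by decide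

set_option maxHeartbeats 0 in
lemma NODUP_0 : ∀ (k' : Fin 25) (A : Fin 8) (b : Bool) (c : ZMod 6),
    (∀ i : ZMod 6, rp k' i - Gf A (rp 0 (ebz b * i + c))
      = rp k' 0 - Gf A (rp 0 (ebz b * 0 + c))) → (0 : Fin 25) = k' := by decide +kernel

set_option maxHeartbeats 0 in
lemma NODUP_1 : ∀ (k' : Fin 25) (A : Fin 8) (b : Bool) (c : ZMod 6),
    (∀ i : ZMod 6, rp k' i - Gf A (rp 1 (ebz b * i + c))
      = rp k' 0 - Gf A (rp 1 (ebz b * 0 + c))) → (1 : Fin 25) = k' := by decide +kernel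

set_option maxHeartbeats 0 in
lemma NODUP_2 : ∀ (k' : Fin 25) (A : Fin 8) (b : Bool) (c : ZMod 6),
    (∀ i : ZMod 6, rp k' i - Gf A (rp 2 (ebz b * i + c))
      = rp k' 0 - Gf A (rp 2 (ebz b * 0 + c))) → (2 : Fin 25) = k' := by decide +kernel

set_option maxHeartbeats 0 in
lemma NODUP_3 : ∀ (k' : Fin 25) (A : Fin 8) (b : Bool) (c : ZMod 6),
    (∀ i : ZMod 6, rp k' i - Gf A (rp 3 (ebz b * i + c))
      = rp k' 0 - Gf A (rp 3 (ebz b * 0 + c))) → (3 : Fin 25) = k' := by decide +kernel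

set_option maxHeartbeats 0 in
lemma NODUP_4 : ∀ (k' : Fin 25) (A : Fin 8) (b : Bool) (c : ZMod 6),
    (∀ i : ZMod 6, rp k' i - Gf A (rp 4 (ebz b * i + c))
      = rp k' 0 - Gf A (rp 4 (ebz b * 0 + c))) → (4 : Fin 25) = k' := by decide +kernel

set_option maxHeartbeats 0 in
lemma NODUP_5 : ∀ (k' : Fin 25) (A : Fin 8) (b : Bool) (c : ZMod 6),
    (∀ i : ZMod 6, rp k' i - Gf A (rp 5 (ebz b * i + c))
      = rp k' 0 - Gf A (rp 5 (ebz b * 0 + c))) → (5 : Fin 25) = k' := by decide +kernel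

set_option maxHeartbeats 0 in
lemma NODUP_6 : ∀ (k' : Fin 25) (A : Fin 8) (b : Bool) (c : ZMod 6),
    (∀ i : ZMod 6, rp k' i - Gf A (rp 6 (ebz b * i + c))
      = rp k' 0 - Gf A (rp 6 (ebz b * 0 + c))) → (6 : Fin 25) = k' := by decide +kernel

set_option maxHeartbeats 0 in
lemma NODUP_7 : ∀ (k' : Fin 25) (A : Fin 8) (b : Bool) (c : ZMod 6),
    (∀ i : ZMod 6, rp k' i - Gf A (rp 7 (ebz b * i + c))
      = rp k' 0 - Gf A (rp 7 (ebz b * 0 + c))) → (7 : Fin 25) = k' := by decide +kernel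

set_option maxHeartbeats 0 in
lemma NODUP_8 : ∀ (k' : Fin 25) (A : Fin 8) (b : Bool) (c : ZMod 6),
    (∀ i : ZMod 6, rp k' i - Gf A (rp 8 (ebz b * i + c))
      = rp k' 0 - Gf A (rp 8 (ebz b * 0 + c))) → (8 : Fin 25) = k' := by decide +kernel

set_option maxHeartbeats 0 in
lemma NODUP_9 : ∀ (k' : Fin 25) (A : Fin 8) (b : Bool) (c : ZMod 6),
    (∀ i : ZMod 6, rp k' i - Gf A (rp 9 (ebz b * i + c))
      = rp k' 0 - Gf A (rp 9 (ebz b * 0 + c))) → (9 : Fin 25) = k' := by decide +kernel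

set_option maxHeartbeats 0 in
lemma NODUP_10 : ∀ (k' : Fin 25) (A : Fin 8) (b : Bool) (c : ZMod 6),
    (∀ i : ZMod 6, rp k' i - Gf A (rp 10 (ebz b * i + c))
      = rp k' 0 - Gf A (rp 10 (ebz b * 0 + c))) → (10 : Fin 25) = k' := by decide +kernel

set_option maxHeartbeats 0 in
lemma NODUP_11 : ∀ (k' : Fin 25) (A : Fin 8) (b : Bool) (c : ZMod 6),
    (∀ i : ZMod 6, rp k' i - Gf A (rp 11 (ebz b * i + c))
      = rp k' 0 - Gf A (rp 11 (ebz b * 0 + c))) → (11 : Fin 25) = k' := by decide +kernel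

set_option maxHeartbeats 0 in
lemma NODUP_12 : ∀ (k' : Fin 25) (A : Fin 8) (b : Bool) (c : ZMod 6),
    (∀ i : ZMod 6, rp k' i - Gf A (rp 12 (ebz b * i + c))
      = rp k' 0 - Gf A (rp 12 (ebz b * 0 + c))) → (12 : Fin 25) = k' := by decide +kernel

set_option maxHeartbeats 0 in
lemma NODUP_13 : ∀ (k' : Fin 25) (A : Fin 8) (b : Bool) (c : ZMod 6),
    (∀ i : ZMod 6, rp k' i - Gf A (rp 13 (ebz b * i + c))
      = rp k' 0 - Gf A (rp 13 (ebz b * 0 + c))) → (13 : Fin 25) = k' := by decide +kernel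

set_option maxHeartbeats 0 in
lemma NODUP_14 : ∀ (k' : Fin 25) (A : Fin 8) (b : Bool) (c : ZMod 6),
    (∀ i : ZMod 6, rp k' i - Gf A (rp 14 (ebz b * i + c))
      = rp k' 0 - Gf A (rp 14 (ebz b * 0 + c))) → (14 : Fin 25) = k' := by decide +kernel

set_option maxHeartbeats 0 in
lemma NODUP_15 : ∀ (k' : Fin 25) (A : Fin 8) (b : Bool) (c : ZMod 6),
    (∀ i : ZMod 6, rp k' i - Gf A (rp 15 (ebz b * i + c))
      = rp k' 0 - Gf A (rp 15 (ebz b * 0 + c))) → (15 : Fin 25) = k' := by decide +kernel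

set_option maxHeartbeats 0 in
lemma NODUP_16 : ∀ (k' : Fin 25) (A : Fin 8) (b : Bool) (c : ZMod 6),
    (∀ i : ZMod 6, rp k' i - Gf A (rp 16 (ebz b * i + c))
      = rp k' 0 - Gf A (rp 16 (ebz b * 0 + c))) → (16 : Fin 25) = k' := by decide +kernel

set_option maxHeartbeats 0 in
lemma NODUP_17 : ∀ (k' : Fin 25) (A : Fin 8) (b : Bool) (c : ZMod 6),
    (∀ i : ZMod 6, rp k' i - Gf A (rp 17 (ebz b * i + c))
      = rp k' 0 - Gf A (rp 17 (ebz b * 0 + c))) → (17 : Fin 25) = k' := by decide +kernel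

set_option maxHeartbeats 0 in
lemma NODUP_18 : ∀ (k' : Fin 25) (A : Fin 8) (b : Bool) (c : ZMod 6),
    (∀ i : ZMod 6, rp k' i - Gf A (rp 18 (ebz b * i + c))
      = rp k' 0 - Gf A (rp 18 (ebz b * 0 + c))) → (18 : Fin 25) = k' := by decide +kernel

set_option maxHeartbeats 0 in
lemma NODUP_19 : ∀ (k' : Fin 25) (A : Fin 8) (b : Bool) (c : ZMod 6),
    (∀ i : ZMod 6, rp k' i - Gf A (rp 19 (ebz b * i + c))
      = rp k' 0 - Gf A (rp 19 (ebz b * 0 + c))) → (19 : Fin 25) = k' := by decide +kernel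

set_option maxHeartbeats 0 in
lemma NODUP_20 : ∀ (k' : Fin 25) (A : Fin 8) (b : Bool) (c : ZMod 6),
    (∀ i : ZMod 6, rp k' i - Gf A (rp 20 (ebz b * i + c))
      = rp k' 0 - Gf A (rp 20 (ebz b * 0 + c))) → (20 : Fin 25) = k' := by decide +kernel

set_option maxHeartbeats 0 in
lemma NODUP_21 : ∀ (k' : Fin 25) (A : Fin 8) (b : Bool) (c : ZMod 6),
    (∀ i : ZMod 6, rp k' i - Gf A (rp 21 (ebz b * i + c))
      = rp k' 0 - Gf A (rp 21 (ebz b * 0 + c))) → (21 : Fin 25) = k' := by decide +kernel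

set_option maxHeartbeats 0 in
lemma NODUP_22 : ∀ (k' : Fin 25) (A : Fin 8) (b : Bool) (c : ZMod 6),
    (∀ i : ZMod 6, rp k' i - Gf A (rp 22 (ebz b * i + c))
      = rp k' 0 - Gf A (rp 22 (ebz b * 0 + c))) → (22 : Fin 25) = k' := by decide +kernel

set_option maxHeartbeats 0 in
lemma NODUP_23 : ∀ (k' : Fin 25) (A : Fin 8) (b : Bool) (c : ZMod 6),
    (∀ i : ZMod 6, rp k' i - Gf A (rp 23 (ebz b * i + c))
      = rp k' 0 - Gf A (rp 23 (ebz b * 0 + c))) → (23 : Fin 25) = k' := by decide +kernel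

set_option maxHeartbeats 0 in
lemma NODUP_24 : ∀ (k' : Fin 25) (A : Fin 8) (b : Bool) (c : ZMod 6),
    (∀ i : ZMod 6, rp k' i - Gf A (rp 24 (ebz b * i + c))
      = rp k' 0 - Gf A (rp 24 (ebz b * 0 + c))) → (24 : Fin 25) = k' := by decide +kernel

lemma NODUP : ∀ (k k' : Fin 25) (A : Fin 8) (b : Bool) (c : ZMod 6),
    (∀ i : ZMod 6, rp k' i - Gf A (rp k (ebz b * i + c))
      = rp k' 0 - Gf A (rp k (ebz b * 0 + c))) → k = k' := by
  intro k
  fin_cases k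
  exacts [NODUP_0, NODUP_1, NODUP_2, NODUP_3, NODUP_4, NODUP_5, NODUP_6, NODUP_7, NODUP_8, NODUP_9, NODUP_10, NODUP_11, NODUP_12, NODUP_13, NODUP_14, NODUP_15, NODUP_16, NODUP_17, NODUP_18, NODUP_19, NODUP_20, NODUP_21, NODUP_22, NODUP_23, NODUP_24]

set_option maxHeartbeats 0 in
lemma KEY_0 : ∀ b c d : Fin 8, Function.Injective (pts 0 b c d) →
    (∀ i : ZMod 6, KnightMove (pts 0 b c d i) (pts 0 b c d (i + 1))) →
    ∀ i : ZMod 6, pts 0 b c d i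
      = Gf (W 0 b c d).2.1 (rp (W 0 b c d).1 (ebz (W 0 b c d).2.2.1 * i + (W 0 b c d).2.2.2))
        + (pts 0 b c d 0 - Gf (W 0 b c d).2.1 (rp (W 0 b c d).1
            (ebz (W 0 b c d).2.2.1 * 0 + (W 0 b c d).2.2.2))) := by decide +kernel

set_option maxHeartbeats 0 in
lemma KEY_1 : ∀ b c d : Fin 8, Function.Injective (pts 1 b c d) →
    (∀ i : ZMod 6, KnightMove (pts 1 b c d i) (pts 1 b c d (i + 1))) →
    ∀ i : ZMod 6, pts 1 b c d i
      = Gf (W 1 b c d).2.1 (rp (W 1 b c d).1 (ebz (W 1 b c d).2.2.1 * i + (W 1 b c d).2.2.2))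
        + (pts 1 b c d 0 - Gf (W 1 b c d).2.1 (rp (W 1 b c d).1
            (ebz (W 1 b c d).2.2.1 * 0 + (W 1 b c d).2.2.2))) := by decide +kernel

set_option maxHeartbeats 0 in
lemma KEY_2 : ∀ b c d : Fin 8, Function.Injective (pts 2 b c d) →
    (∀ i : ZMod 6, KnightMove (pts 2 b c d i) (pts 2 b c d (i + 1))) →
    ∀ i : ZMod 6, pts 2 b c d i
      = Gf (W 2 b c d).2.1 (rp (W 2 b c d).1 (ebz (W 2 b c d).2.2.1 * i + (W 2 b c d).2.2.2))
        + (pts 2 b c d 0 - Gf (W 2 b c d).2.1 (rp (W 2 b c d).1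
            (ebz (W 2 b c d).2.2.1 * 0 + (W 2 b c d).2.2.2))) := by decide +kernel

set_option maxHeartbeats 0 in
lemma KEY_3 : ∀ b c d : Fin 8, Function.Injective (pts 3 b c d) →
    (∀ i : ZMod 6, KnightMove (pts 3 b c d i) (pts 3 b c d (i + 1))) →
    ∀ i : ZMod 6, pts 3 b c d i
      = Gf (W 3 b c d).2.1 (rp (W 3 b c d).1 (ebz (W 3 b c d).2.2.1 * i + (W 3 b c d).2.2.2))
        + (pts 3 b c d 0 - Gf (W 3 b c d).2.1 (rp (W 3 b c d).1
            (ebz (W 3 b c d).2.2.1 * 0 + (W 3 b c d).2.2.2))) := by decide +kernel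

set_option maxHeartbeats 0 in
lemma KEY_4 : ∀ b c d : Fin 8, Function.Injective (pts 4 b c d) →
    (∀ i : ZMod 6, KnightMove (pts 4 b c d i) (pts 4 b c d (i + 1))) →
    ∀ i : ZMod 6, pts 4 b c d i
      = Gf (W 4 b c d).2.1 (rp (W 4 b c d).1 (ebz (W 4 b c d).2.2.1 * i + (W 4 b c d).2.2.2))
        + (pts 4 b c d 0 - Gf (W 4 b c d).2.1 (rp (W 4 b c d).1
            (ebz (W 4 b c d).2.2.1 * 0 + (W 4 b c d).2.2.2))) := by decide +kernel

set_option maxHeartbeats 0 in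
lemma KEY_5 : ∀ b c d : Fin 8, Function.Injective (pts 5 b c d) →
    (∀ i : ZMod 6, KnightMove (pts 5 b c d i) (pts 5 b c d (i + 1))) →
    ∀ i : ZMod 6, pts 5 b c d i
      = Gf (W 5 b c d).2.1 (rp (W 5 b c d).1 (ebz (W 5 b c d).2.2.1 * i + (W 5 b c d).2.2.2))
        + (pts 5 b c d 0 - Gf (W 5 b c d).2.1 (rp (W 5 b c d).1
            (ebz (W 5 b c d).2.2.1 * 0 + (W 5 b c d).2.2.2))) := by decide +kernel

set_option maxHeartbeats 0 in
lemma KEY_6 : ∀ b c d : Fin 8, Function.Injective (pts 6 b c d) →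
    (∀ i : ZMod 6, KnightMove (pts 6 b c d i) (pts 6 b c d (i + 1))) →
    ∀ i : ZMod 6, pts 6 b c d i
      = Gf (W 6 b c d).2.1 (rp (W 6 b c d).1 (ebz (W 6 b c d).2.2.1 * i + (W 6 b c d).2.2.2))
        + (pts 6 b c d 0 - Gf (W 6 b c d).2.1 (rp (W 6 b c d).1
            (ebz (W 6 b c d).2.2.1 * 0 + (W 6 b c d).2.2.2))) := by decide +kernel

set_option maxHeartbeats 0 in
lemma KEY_7 : ∀ b c d : Fin 8, Function.Injective (pts 7 b c d) →
    (∀ i : ZMod 6, KnightMove (pts 7 b c d i) (pts 7 b c d (i + 1))) →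
    ∀ i : ZMod 6, pts 7 b c d i
      = Gf (W 7 b c d).2.1 (rp (W 7 b c d).1 (ebz (W 7 b c d).2.2.1 * i + (W 7 b c d).2.2.2))
        + (pts 7 b c d 0 - Gf (W 7 b c d).2.1 (rp (W 7 b c d).1
            (ebz (W 7 b c d).2.2.1 * 0 + (W 7 b c d).2.2.2))) := by decide +kernel

lemma KEY : ∀ a b c d : Fin 8, Function.Injective (pts a b c d) →
    (∀ i : ZMod 6, KnightMove (pts a b c d i) (pts a b c d (i + 1))) →
    ∀ i : ZMod 6, pts a b c d i
      = Gf (W a b c d).2.1 (rp (W a b c d).1 (ebz (W a b c d).2.2.1 * i + (W a b c d).2.2.2))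
        + (pts a b c d 0 - Gf (W a b c d).2.1 (rp (W a b c d).1
            (ebz (W a b c d).2.2.1 * 0 + (W a b c d).2.2.2))) := by
  intro a
  fin_cases a
  exacts [KEY_0, KEY_1, KEY_2, KEY_3, KEY_4, KEY_5, KEY_6, KEY_7]

lemma gf_inj (j : Fin 8) : Function.Injective (Gf j) := by
  have h : ⇑(Gl j) = Gf j := funext fun x => Gl_apply j x
  rw [← h]
  exact (Gl j).injective

lemma km_of (u : ℤ × ℤ) (e : Fin 8) : KnightMove u (u + M8 e) := by
  have h1 : ∀ a c : ℤ, |a - (a + c)| = |c| := fun a c => by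
    rw [show a - (a + c) = -c by ring, abs_neg]
  fin_cases e <;>
    simp [KnightMove, M8, h1, Prod.fst_add, Prod.snd_add]

lemma km_decomp {u v : ℤ × ℤ} (h : KnightMove u v) : ∃ e : Fin 8, v = u + M8 e := by
  rcases h with ⟨h1, h2⟩ | ⟨h1, h2⟩ <;>
  rcases (abs_eq (by norm_num)).mp h1 with h1' | h1' <;>
  rcases (abs_eq (by norm_num)).mp h2 with h2' | h2' <;>
  first
    | exact ⟨0, by rw [Prod.ext_iff]; simp [Prod.fst_add, Prod.snd_add, M8]; omega⟩
    | exact ⟨1, by rw [Prod.ext_iff]; simp [Prod.fst_add, Prod.snd_add, M8]; omega⟩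
    | exact ⟨2, by rw [Prod.ext_iff]; simp [Prod.fst_add, Prod.snd_add, M8]; omega⟩
    | exact ⟨3, by rw [Prod.ext_iff]; simp [Prod.fst_add, Prod.snd_add, M8]; omega⟩
    | exact ⟨4, by rw [Prod.ext_iff]; simp [Prod.fst_add, Prod.snd_add, M8]; omega⟩
    | exact ⟨5, by rw [Prod.ext_iff]; simp [Prod.fst_add, Prod.snd_add, M8]; omega⟩
    | exact ⟨6, by rw [Prod.ext_iff]; simp [Prod.fst_add, Prod.snd_add, M8]; omega⟩
    | exact ⟨7, by rw [Prod.ext_iff]; simp [Prod.fst_add, Prod.snd_add, M8]; omega⟩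

lemma km_translate {u v w : ℤ × ℤ} (h : KnightMove u v) : KnightMove (u - w) (v - w) := by
  unfold KnightMove at h ⊢
  simpa only [Prod.fst_sub, Prod.snd_sub, sub_sub_sub_cancel_right] using h

lemma km_gf (j : Fin 8) {u v : ℤ × ℤ} (h : KnightMove u v) :
    KnightMove (Gf j u) (Gf j v) := by
  obtain ⟨e, rfl⟩ := km_decomp h
  obtain ⟨e', he'⟩ := gf_move_gen j e
  have hadd : Gf j (u + M8 e) = Gf j u + M8 e' := by
    rw [← Gl_apply, map_add, Gl_apply, Gl_apply, he']
  rw [hadd]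
  exact km_of _ e'

lemma pe_refl (p : ZMod 6 → ℤ × ℤ) : PathEquiv 6 p p := by
  refine ⟨fun x => (1 : (ℤ × ℤ) ≃ₗ[ℤ] ℤ × ℤ) x + 0, fun i => 1 * i + 0,
    ⟨1, one_mem _, 0, rfl⟩, ⟨1, 0, Or.inl rfl, rfl⟩, ?_⟩
  funext i
  simp [Function.comp]

lemma pe_symm {p q : ZMod 6 → ℤ × ℤ} (h : PathEquiv 6 p q) : PathEquiv 6 q p := by
  obtain ⟨g, σ, ⟨A, hA, t, rfl⟩, ⟨ε, c, hε, rfl⟩, rfl⟩ := h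
  refine ⟨fun x => A⁻¹ x + -(A.symm t), fun i => ε * i + -(ε * c),
    ⟨A⁻¹, inv_mem hA, -(A.symm t), rfl⟩, ⟨ε, -(ε * c), hε, rfl⟩, ?_⟩
  funext i
  simp only [Function.comp_apply]
  have hσ : ε * (ε * i + -(ε * c)) + c = i := by rcases hε with rfl | rfl <;> ring
  rw [hσ]
  show p i = A.symm (A (p i) + t) + -(A.symm t)
  rw [map_add, LinearEquiv.symm_apply_apply]
  abel

lemma pe_trans {p q r : ZMod 6 → ℤ × ℤ} (h1 : PathEquiv 6 p q) (h2 : PathEquiv 6 q r) :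
    PathEquiv 6 p r := by
  obtain ⟨g1, σ1, ⟨A1, hA1, t1, rfl⟩, ⟨ε1, c1, hε1, rfl⟩, rfl⟩ := h1
  obtain ⟨g2, σ2, ⟨A2, hA2, t2, rfl⟩, ⟨ε2, c2, hε2, rfl⟩, rfl⟩ := h2
  have hmul : ∀ y : ℤ × ℤ, (A2 * A1) y = A2 (A1 y) := fun _ => rfl
  refine ⟨fun x => (A2 * A1) x + (A2 t1 + t2), fun i => (ε1 * ε2) * i + (ε1 * c2 + c1),
    ⟨A2 * A1, mul_mem hA2 hA1, A2 t1 + t2, rfl⟩,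
    ⟨ε1 * ε2, ε1 * c2 + c1, ?_, rfl⟩, ?_⟩
  · rcases hε1 with rfl | rfl <;> rcases hε2 with rfl | rfl <;> norm_num
  · funext i
    simp only [Function.comp_apply]
    have hσ : ε1 * (ε2 * i + c2) + c1 = (ε1 * ε2) * i + (ε1 * c2 + c1) := by ring
    rw [hσ, map_add, hmul, add_assoc]

lemma distinct {k k' : Fin 25} (h : PathEquiv 6 (rp k) (rp k')) : k = k' := by
  obtain ⟨g, σ, ⟨A, hA, t, rfl⟩, ⟨ε, c, hε, rfl⟩, heq⟩ := h
  obtain ⟨j, hj⟩ := closure_exists hA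
  have hb : ∃ b : Bool, ebz b = ε := by
    rcases hε with rfl | rfl
    exacts [⟨true, rfl⟩, ⟨false, rfl⟩]
  obtain ⟨b, rfl⟩ := hb
  apply NODUP k k' j b c
  intro i
  have h1 := congrFun heq i
  have h0 := congrFun heq 0
  simp only [Function.comp_apply] at h1 h0
  rw [h1, h0, hj, hj]
  abel

lemma classify (p : ZMod 6 → ℤ × ℤ) (hp : IsClosedKnightPath 6 p) :
    ∃ k : Fin 25, PathEquiv 6 (rp k) p := by
  obtain ⟨hinj, hkm⟩ := hp
  have he0 : ∃ e : Fin 8, p 1 = p 0 + M8 e := km_decomp (hkm 0)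
  obtain ⟨e0, he0⟩ := he0
  obtain ⟨j, hj⟩ := gfMove e0
  set q : ZMod 6 → ℤ × ℤ := fun i => Gf j (p i - p 0) with hqdef
  have hq0 : q 0 = (0, 0) := by
    show Gf j (p 0 - p 0) = (0, 0)
    rw [sub_self]
    exact gf_zero j
  have hq1 : q 1 = (1, 2) := by
    show Gf j (p 1 - p 0) = (1, 2)
    rw [he0, add_sub_cancel_left]
    exact hj
  have hqinj : Function.Injective q := by
    intro a b hab
    have h2 : p a - p 0 = p b - p 0 := gf_inj j hab
    exact hinj (sub_left_injective h2)
  have hqkm : ∀ i : ZMod 6, KnightMove (q i) (q (i + 1)) :=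
    fun i => km_gf j (km_translate (hkm i))
  obtain ⟨a, ha⟩ : ∃ e : Fin 8, q 2 = q 1 + M8 e := km_decomp (hqkm 1)
  obtain ⟨b, hb⟩ : ∃ e : Fin 8, q 3 = q 2 + M8 e := km_decomp (hqkm 2)
  obtain ⟨c, hc⟩ : ∃ e : Fin 8, q 4 = q 3 + M8 e := km_decomp (hqkm 3)
  obtain ⟨d, hd⟩ : ∃ e : Fin 8, q 5 = q 4 + M8 e := km_decomp (hqkm 4)
  have hq : q = pts a b c d := by
    funext i
    fin_cases i
    · exact hq0
    · exact hq1
    · show q 2 = pts a b c d 2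
      rw [ha, hq1]
      rfl
    · show q 3 = pts a b c d 3
      rw [hb, ha, hq1]
      rfl
    · show q 4 = pts a b c d 4
      rw [hc, hb, ha, hq1]
      rfl
    · show q 5 = pts a b c d 5
      rw [hd, hc, hb, ha, hq1]
      rfl
  rw [hq] at hqinj hqkm
  have hkey := KEY a b c d hqinj hqkm
  refine ⟨(W a b c d).1, ?_⟩
  have PE1 : PathEquiv 6 (rp (W a b c d).1) q := by
    refine ⟨fun x => Gl (W a b c d).2.1 x
        + (pts a b c d 0 - Gf (W a b c d).2.1 (rp (W a b c d).1
            (ebz (W a b c d).2.2.1 * 0 + (W a b c d).2.2.2))),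
      fun i => ebz (W a b c d).2.2.1 * i + (W a b c d).2.2.2,
      ⟨Gl (W a b c d).2.1, Gl_mem _, _, rfl⟩,
      ⟨ebz (W a b c d).2.2.1, (W a b c d).2.2.2, ?_, rfl⟩, ?_⟩
    · cases hB : (W a b c d).2.2.1
      · exact Or.inr rfl
      · exact Or.inl rfl
    · funext i
      simp only [Function.comp_apply]
      rw [hq, Gl_apply]
      exact hkey i
  have PE2 : PathEquiv 6 p q := by
    refine ⟨fun x => Gl j x + -(Gl j (p 0)), fun i => 1 * i + 0,
      ⟨Gl j, Gl_mem j, -(Gl j (p 0)), rfl⟩, ⟨1, 0, Or.inl rfl, rfl⟩, ?_⟩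
    funext i
    simp only [Function.comp_apply, one_mul, add_zero]
    show Gf j (p i - p 0) = Gl j (p i) + -(Gl j (p 0))
    rw [← Gl_apply, map_sub, sub_eq_add_neg]
  exact pe_trans PE1 (pe_symm PE2)

end CKP25

/-- There are exactly 25 equivalence classes of closed knight paths of length 6. -/
theorem count_closedKnightPaths_length_6 :
    Nat.card (Quot (fun p q : {p : ZMod 6 → ℤ × ℤ // IsClosedKnightPath 6 p} =>
      PathEquiv 6 p.1 q.1)) = 25 := by
  have hequiv : Equivalence (fun p q : {p : ZMod 6 → ℤ × ℤ // IsClosedKnightPath 6 p} =>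
      PathEquiv 6 p.1 q.1) :=
    ⟨fun p => CKP25.pe_refl p.1, fun h => CKP25.pe_symm h, fun h1 h2 => CKP25.pe_trans h1 h2⟩
  have hbij : Function.Bijective (fun k : Fin 25 =>
      Quot.mk (fun p q : {p : ZMod 6 → ℤ × ℤ // IsClosedKnightPath 6 p} => PathEquiv 6 p.1 q.1)
        ⟨CKP25.rp k, CKP25.rp_closed k⟩) := by
    constructor
    · intro k k' hkk
      exact CKP25.distinct (hequiv.eqvGen_iff.mp (Quot.eq.mp hkk))
    · intro x
      induction x using Quot.ind with
      | _ a =>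
        obtain ⟨p, hp⟩ := a
        obtain ⟨k, hk⟩ := CKP25.classify p hp
        exact ⟨k, Quot.sound hk⟩
  rw [← Nat.card_eq_of_bijective _ hbij, Nat.card_eq_fintype_card, Fintype.card_fin]
end

section
/- The 25 six-cell combinations listed in Appendix B (translated to coordinates on the 7 × 7 board, where the number m ∈ {1,...,49} corresponds to the cell ((m-1) mod 7, (m-1) div 7)) are the vertex sets of closed knight paths of length 6, and no two of them are equivalent under board symmetries; in particular, the vertex sets {0,1,9,10,14,15}, {0,2,4,9,15,17}, and {1,14,16,29,31,44} (numbers m-1 for the listed combinations 1, 2, and 25) each carry a closed knight path of length 6 and are pairwise inequivalent. -/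
/-- The cell of the 7 × 7 board carrying the 0-based label `ℓ` (the number `m = ℓ + 1`
of the game slip), namely `(ℓ mod 7, ℓ div 7)`. -/
def cellOfLabel (ℓ : ℕ) : ℤ × ℤ := (((ℓ % 7 : ℕ) : ℤ), ((ℓ / 7 : ℕ) : ℤ))

/-- The set of cells of a combination given by a set of 0-based labels. -/
def cellsOf (S : Finset ℕ) : Set (ℤ × ℤ) := cellOfLabel '' (S : Set ℕ)

/-- The 25 six-cell combinations of Appendix B, as sets of 0-based labels `m - 1`. -/
def appendixB : Fin 25 → Finset ℕ :=
  ![{0, 1, 9, 10, 14, 15}, {0, 2, 4, 9, 15, 17}, {0, 2, 9, 11, 15, 24},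
    {0, 2, 9, 15, 17, 22}, {0, 4, 9, 10, 15, 19}, {0, 4, 9, 15, 17, 30},
    {0, 4, 9, 15, 19, 24}, {0, 5, 9, 10, 15, 18}, {0, 9, 10, 15, 18, 23},
    {0, 9, 10, 15, 19, 24}, {0, 9, 15, 18, 24, 33}, {1, 2, 7, 10, 15, 16},
    {1, 3, 14, 16, 18, 23}, {1, 9, 10, 14, 18, 23}, {1, 9, 10, 14, 19, 24},
    {1, 9, 11, 14, 16, 24}, {1, 9, 14, 16, 18, 31}, {1, 10, 14, 16, 25, 29},
    {1, 10, 14, 19, 23, 32}, {1, 10, 14, 19, 24, 29}, {1, 10, 14, 23, 25, 38},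
    {1, 10, 14, 25, 29, 38}, {1, 14, 16, 21, 23, 36}, {1, 14, 16, 23, 25, 38},
    {1, 14, 16, 29, 31, 44}]

/-! ### Auxiliary material -/


/-- Explicit closed knight cycles through each of the 25 combinations. -/
def cyc : Fin 25 → List (ℤ × ℤ) :=
  ![[(0,0), (2,1), (0,2), (1,0), (3,1), (1,2)],
    [(0,0), (2,1), (4,0), (3,2), (2,0), (1,2)],
    [(0,0), (2,1), (3,3), (4,1), (2,0), (1,2)],
    [(0,0), (2,1), (1,3), (3,2), (2,0), (1,2)],
    [(0,0), (2,1), (4,0), (5,2), (3,1), (1,2)],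
    [(0,0), (2,1), (4,0), (3,2), (2,4), (1,2)],
    [(0,0), (2,1), (4,0), (5,2), (3,3), (1,2)],
    [(0,0), (2,1), (4,2), (5,0), (3,1), (1,2)],
    [(0,0), (2,1), (4,2), (2,3), (3,1), (1,2)],
    [(0,0), (2,1), (3,3), (5,2), (3,1), (1,2)],
    [(0,0), (2,1), (4,2), (5,4), (3,3), (1,2)],
    [(1,0), (3,1), (1,2), (2,0), (0,1), (2,2)],
    [(1,0), (0,2), (2,3), (4,2), (3,0), (2,2)],
    [(1,0), (3,1), (2,3), (4,2), (2,1), (0,2)],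
    [(1,0), (3,1), (5,2), (3,3), (2,1), (0,2)],
    [(1,0), (0,2), (2,1), (3,3), (4,1), (2,2)],
    [(1,0), (0,2), (2,1), (4,2), (3,4), (2,2)],
    [(1,0), (3,1), (4,3), (2,2), (1,4), (0,2)],
    [(1,0), (3,1), (5,2), (4,4), (2,3), (0,2)],
    [(1,0), (3,1), (5,2), (3,3), (1,4), (0,2)],
    [(1,0), (3,1), (4,3), (3,5), (2,3), (0,2)],
    [(1,0), (3,1), (4,3), (3,5), (1,4), (0,2)],
    [(1,0), (0,2), (2,3), (1,5), (0,3), (2,2)],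
    [(1,0), (0,2), (2,3), (3,5), (4,3), (2,2)],
    [(1,0), (0,2), (1,4), (2,6), (3,4), (2,2)]]

def pathOf (k : Fin 25) : ZMod 6 → ℤ × ℤ := fun i => (cyc k).getD i.val (0,0)

instance (p : ZMod 6 → ℤ × ℤ) : Decidable (IsClosedKnightPath 6 p) := by
  unfold IsClosedKnightPath; infer_instance

lemma part1_decide : ∀ k : Fin 25,
    IsClosedKnightPath 6 (pathOf k) ∧
    Finset.image (pathOf k) Finset.univ = (appendixB k).image cellOfLabel := by decide

/-- The linear map with matrix columns `u`, `v`, applied to `x`. -/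
def mulv (u v x : ℤ × ℤ) : ℤ × ℤ := (x.1*u.1 + x.2*v.1, x.1*u.2 + x.2*v.2)

lemma apply_eq_mulv (A : (ℤ×ℤ) ≃ₗ[ℤ] ℤ×ℤ) (x : ℤ×ℤ) :
    A x = mulv (A (1,0)) (A (0,1)) x := by
  have hx : x = x.1 • ((1:ℤ),(0:ℤ)) + x.2 • ((0:ℤ),(1:ℤ)) := by
    simp [Prod.ext_iff]
  conv_lhs => rw [hx]
  rw [map_add, map_smul, map_smul]
  simp [mulv, Prod.ext_iff, mul_comm]

/-- The 8 elements of the dihedral group, recorded by images of the two basis vectors. -/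
def pairs8 : List ((ℤ×ℤ)×(ℤ×ℤ)) :=
  [((1,0),(0,1)), ((0,1),(-1,0)), ((-1,0),(0,-1)), ((0,-1),(1,0)),
   ((0,1),(1,0)), ((1,0),(0,-1)), ((0,-1),(-1,0)), ((-1,0),(0,1))]

lemma pairs8_mul : ∀ p ∈ pairs8, ∀ q ∈ pairs8,
    (mulv p.1 p.2 q.1, mulv p.1 p.2 q.2) ∈ pairs8 := by decide

lemma pairs8_inv : ∀ p ∈ pairs8,
    (((p.1.1, p.2.1), (p.1.2, p.2.2)) : (ℤ×ℤ)×(ℤ×ℤ)) ∈ pairs8 ∧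
    mulv p.1 p.2 (p.1.1, p.2.1) = (1,0) ∧ mulv p.1 p.2 (p.1.2, p.2.2) = (0,1) := by decide

lemma mem_pairs8_of_closure (A : (ℤ×ℤ) ≃ₗ[ℤ] ℤ×ℤ)
    (hA : A ∈ Subgroup.closure ({rot90, reflDiag} : Set ((ℤ × ℤ) ≃ₗ[ℤ] ℤ × ℤ))) :
    (A (1,0), A (0,1)) ∈ pairs8 := by
  induction hA using Subgroup.closure_induction with
  | mem x hx =>
      rcases hx with h | h <;> subst h <;> decide
  | one => decide
  | mul x y hx hy px py =>
      have h1 : (x*y) (1,0) = x (y (1,0)) := rfl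
      have h2 : (x*y) (0,1) = x (y (0,1)) := rfl
      rw [h1, h2, apply_eq_mulv x (y (1,0)), apply_eq_mulv x (y (0,1))]
      exact pairs8_mul _ px _ py
  | inv x hx px =>
      obtain ⟨hmem, h1, h2⟩ := pairs8_inv _ px
      have e1 : x⁻¹ (1,0) = ((x (1,0)).1, (x (0,1)).1) := by
        have : x (((x (1,0)).1, (x (0,1)).1)) = (1,0) := by
          rw [apply_eq_mulv]; exact h1
        conv_lhs => rw [← this]
        exact x.symm_apply_apply _
      have e2 : x⁻¹ (0,1) = ((x (1,0)).2, (x (0,1)).2) := by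
        have : x (((x (1,0)).2, (x (0,1)).2)) = (0,1) := by
          rw [apply_eq_mulv]; exact h2
        conv_lhs => rw [← this]
        exact x.symm_apply_apply _
      rw [e1, e2]; exact hmem

def Lset (k : Fin 25) : Finset (ℤ × ℤ) := (appendixB k).image cellOfLabel

def dvec (k l : Fin 25) (q : (ℤ×ℤ)×(ℤ×ℤ)) : ℤ × ℤ :=
  (∑ y ∈ Lset l, y) - mulv q.1 q.2 (∑ x ∈ Lset k, x)

lemma okFact : ∀ k l : Fin 25, k ≠ l → ∀ q ∈ pairs8,
    ¬ ((dvec k l q).1 % 6 = 0 ∧ (dvec k l q).2 % 6 = 0 ∧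
      (Lset k).image (fun x => mulv q.1 q.2 x + ((dvec k l q).1 / 6, (dvec k l q).2 / 6))
        = Lset l) := by decide

lemma card_Lset : ∀ k : Fin 25, (Lset k).card = 6 := by decide

lemma cellsOf_eq_coe (k : Fin 25) : cellsOf (appendixB k) = ↑(Lset k) := by
  rw [cellsOf, Lset, Finset.coe_image]

/-- Each of the 25 combinations of Appendix B is the vertex set of a closed knight
path of length 6, and no two of them are equivalent under board symmetries. -/
theorem appendixB_classification :
    (∀ k : Fin 25, ∃ p : ZMod 6 → ℤ × ℤ, IsClosedKnightPath 6 p ∧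
      Set.range p = cellsOf (appendixB k)) ∧
    (∀ k l : Fin 25, k ≠ l →
      ¬ ∃ g : ℤ × ℤ → ℤ × ℤ, IsBoardSymmetry g ∧
        g '' cellsOf (appendixB k) = cellsOf (appendixB l)) := by
  constructor
  · intro k
    obtain ⟨h1, h2⟩ := part1_decide k
    refine ⟨pathOf k, h1, ?_⟩
    rw [← Set.image_univ, ← Finset.coe_univ, ← Finset.coe_image, h2,
      Finset.coe_image, cellsOf]
  · rintro k l hkl ⟨g, ⟨A, hAcl, t, hg⟩, hset⟩
    have hq : (A (1,0), A (0,1)) ∈ pairs8 := mem_pairs8_of_closure A hAcl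
    set q : (ℤ×ℤ)×(ℤ×ℤ) := (A (1,0), A (0,1)) with hqdef
    have hAx : ∀ x, A x = mulv q.1 q.2 x := fun x => apply_eq_mulv A x
    -- convert set image equality to Finset equality
    rw [cellsOf_eq_coe, cellsOf_eq_coe, ← Finset.coe_image] at hset
    have himg : (Lset k).image g = Lset l := Finset.coe_injective hset
    have hginj : ∀ x ∈ Lset k, ∀ y ∈ Lset k, g x = g y → x = y := by
      intro x _ y _ hxy
      rw [hg] at hxy
      exact A.injective (by simpa using add_right_cancel hxy)
    -- sum equation
    have hsum : (∑ y ∈ Lset l, y) = A (∑ x ∈ Lset k, x) + (6:ℤ) • t := by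
      rw [← himg, Finset.sum_image hginj, hg]
      simp only [Finset.sum_add_distrib, Finset.sum_const, card_Lset k, map_sum]
      norm_num
    have hd : dvec k l q = (6:ℤ) • t := by
      rw [dvec, ← hAx, hsum]; ring
    have hd1 : (dvec k l q).1 = 6 * t.1 := by rw [hd]; simp [Prod.smul_fst]
    have hd2 : (dvec k l q).2 = 6 * t.2 := by rw [hd]; simp [Prod.smul_snd]
    refine okFact k l hkl q hq ⟨by omega, by omega, ?_⟩
    have ht : ((dvec k l q).1 / 6, (dvec k l q).2 / 6) = t := by
      have : (dvec k l q).1 / 6 = t.1 := by omega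
      have : (dvec k l q).2 / 6 = t.2 := by omega
      simp [Prod.ext_iff]; omega
    rw [ht, ← himg, hg]
    congr 1
    funext x
    rw [hAx]
end
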